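/- Let T₀ > 0 and define Ψ_θ(λ) = λ^{θ+1} ∫_0^{T₀} e^{−λt} t^θ dt for λ > 0. Then for every θ ∈ [0,1), liminf_{λ → +∞} Ψ_θ(λ) ≥ 2^{θ−1}. -/

import Mathlib

open MeasureTheory Real Set Filter

/-- `Ψ_θ(λ) = λ^{θ+1} ∫₀^{T₀} e^{−λt} tᶿ dt`. -/
noncomputable def Psi (T₀ θ l : ℝ) : ℝ :=
  l ^ (θ + 1) * ∫ t in (0:ℝ)..T₀, Real.exp (-l * t) * t ^ θ

/-- `liminf_{λ → +∞} Ψ_θ(λ) ≥ 2^{θ−1}` for every `θ ∈ [0,1)`. -/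
theorem stmt9 (T₀ : ℝ) (hT₀ : 0 < T₀) (θ : ℝ) (hθ0 : 0 ≤ θ) (hθ1 : θ < 1) :
    (2 : ℝ) ^ (θ - 1) ≤ Filter.liminf (fun l : ℝ => Psi T₀ θ l) Filter.atTop := by
  have hθ1' : (0:ℝ) < θ + 1 := by linarith
  -- Step A: change of variables
  have key : ∀ l : ℝ, 0 < l →
      Psi T₀ θ l = ∫ s in (0:ℝ)..(l * T₀), Real.exp (-s) * s ^ θ := by
    intro l hl
    have h1 : (∫ t in (0:ℝ)..T₀, Real.exp (-(l * t)) * (l * t) ^ θ)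
        = l⁻¹ • ∫ s in (l * 0)..(l * T₀), Real.exp (-s) * s ^ θ :=
      intervalIntegral.integral_comp_mul_left (fun s => Real.exp (-s) * s ^ θ) hl.ne'
    have h2 : (∫ t in (0:ℝ)..T₀, Real.exp (-(l * t)) * (l * t) ^ θ)
        = l ^ θ * ∫ t in (0:ℝ)..T₀, Real.exp (-l * t) * t ^ θ := by
      rw [← intervalIntegral.integral_const_mul]
      apply intervalIntegral.integral_congr
      intro t ht
      rw [Set.uIcc_of_le hT₀.le] at ht
      show Real.exp (-(l * t)) * (l * t) ^ θ = l ^ θ * (Real.exp (-l * t) * t ^ θ)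
      rw [Real.mul_rpow hl.le ht.1, neg_mul]
      ring
    have hlz : l ^ (θ + 1) = l * l ^ θ := by
      rw [Real.rpow_add hl, Real.rpow_one]; ring
    rw [mul_zero] at h1
    rw [Psi, hlz, mul_assoc, ← h2, h1, smul_eq_mul, ← mul_assoc,
      mul_inv_cancel₀ hl.ne', one_mul]
  -- Step B: tendsto to Gamma (θ+1)
  have hGamma : Real.Gamma (θ + 1) = ∫ s in Set.Ioi (0:ℝ), Real.exp (-s) * s ^ θ := by
    rw [Real.Gamma_eq_integral hθ1']
    simp only [add_sub_cancel_right]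
  have hint : IntegrableOn (fun s : ℝ => Real.exp (-s) * s ^ θ) (Set.Ioi 0) := by
    have := Real.GammaIntegral_convergent hθ1'
    simpa using this
  have hb : Tendsto (fun l : ℝ => l * T₀) atTop atTop :=
    Filter.Tendsto.atTop_mul_const hT₀ tendsto_id
  have htend : Tendsto (fun l : ℝ => ∫ s in (0:ℝ)..(l * T₀), Real.exp (-s) * s ^ θ)
      atTop (nhds (Real.Gamma (θ + 1))) := by
    rw [hGamma]
    exact MeasureTheory.intervalIntegral_tendsto_integral_Ioi 0 hint hb
  have hPsitend : Tendsto (fun l : ℝ => Psi T₀ θ l) atTop (nhds (Real.Gamma (θ + 1))) := by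
    refine htend.congr' ?_
    filter_upwards [eventually_gt_atTop (0:ℝ)] with l hl
    exact (key l hl).symm
  rw [hPsitend.liminf_eq]
  -- Step C: 2^(θ-1) ≤ Γ(θ+1) via log-convexity
  set a : ℝ := 1 / (2 - θ) with ha_def
  set b : ℝ := (1 - θ) / (2 - θ) with hb_def
  have h2θ : (0:ℝ) < 2 - θ := by linarith
  have ha : 0 < a := by positivity
  have hbpos : 0 < b := by
    apply div_pos <;> linarith
  have hab : a + b = 1 := by
    rw [ha_def, hb_def, ← add_div, div_eq_one_iff_eq h2θ.ne']
    ring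
  have hG3 : Real.Gamma 3 = 2 := by
    rw [show (3:ℝ) = (2:ℕ) + 1 by norm_num, Real.Gamma_nat_eq_factorial]
    norm_num
  have hconv := Real.Gamma_mul_add_mul_le_rpow_Gamma_mul_rpow_Gamma
    (s := θ + 1) (t := 3) hθ1' (by norm_num) ha hbpos hab
  have harg : a * (θ + 1) + b * 3 = 2 := by
    rw [ha_def, hb_def]; field_simp; ring
  rw [harg, hG3] at hconv
  have hG2 : Real.Gamma 2 = 1 := by
    rw [show (2:ℝ) = (1:ℕ) + 1 by norm_num, Real.Gamma_nat_eq_factorial]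
    norm_num
  rw [hG2] at hconv
  -- hconv : 1 ≤ Γ(θ+1)^a * 2^b
  have hGpos : 0 < Real.Gamma (θ + 1) := Real.Gamma_pos_of_pos hθ1'
  have h2b : (0:ℝ) < (2:ℝ) ^ b := Real.rpow_pos_of_pos two_pos b
  have step1 : (2:ℝ) ^ (-b) ≤ Real.Gamma (θ + 1) ^ a := by
    rw [Real.rpow_neg (by norm_num : (0:ℝ) ≤ 2), inv_eq_one_div, div_le_iff₀ h2b]
    exact hconv
  have hexp : ((2:ℝ) ^ (θ - 1)) ^ a = (2:ℝ) ^ (-b) := by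
    rw [← Real.rpow_mul (by norm_num : (0:ℝ) ≤ 2)]
    congr 1
    rw [ha_def, hb_def]
    field_simp
    ring
  exact (Real.rpow_le_rpow_iff (Real.rpow_pos_of_pos two_pos _).le hGpos.le ha).mp
    (hexp ▸ step1)
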